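/- Let F be a field, Γ a commutative additive monoid with bounded decompositions, and C an F-coalgebra with comultiplication Δ and counit ε, graded by Γ (so C = ⊕_{γ∈Γ} C_γ as an internal direct sum of subspaces) with Δ respecting the grading, i.e. Δ(C_γ) ⊆ Σ_{α+β=γ} C_α ⊗ C_β for every γ. Let D ⊆ C be a graded subcoalgebra: D = ⊕_γ (D ∩ C_γ), and Δ(D) is contained in the image of D ⊗ D in C ⊗ C. If D ∩ C_0 = {0}, then D = {0}. -/

import Mathlib

open TensorProduct

/-- Let `Γ` be a commutative additive monoid with bounded
decompositions and `C` an `F`-coalgebra graded by `Γ`, with `Δ` respecting the grading.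
If `D ⊆ C` is a graded subcoalgebra with `D ∩ C_0 = {0}`, then `D = {0}`. -/
theorem statement12 (F : Type*) [Field F]
    (Γ : Type*) [AddCommMonoid Γ] [DecidableEq Γ]
    -- `Γ` has bounded decompositions
    (hbdd : ∀ γ : Γ, γ ≠ 0 → ∃ h : ℕ, ∀ l : List Γ,
      (∀ x ∈ l, x ≠ 0) → l.sum = γ → l.length ≤ h)
    (C : Type*) [AddCommGroup C] [Module F C] [Coalgebra F C]
    (𝒞 : Γ → Submodule F C)
    (hinternal : DirectSum.IsInternal 𝒞)
    -- `Δ` respects the grading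
    (hΔ : ∀ γ : Γ, ∀ x ∈ 𝒞 γ, Coalgebra.comul x ∈
      ⨆ p : {p : Γ × Γ // p.1 + p.2 = γ},
        Submodule.map₂ (TensorProduct.mk F C C) (𝒞 (p : Γ × Γ).1) (𝒞 (p : Γ × Γ).2))
    (D : Submodule F C)
    -- `D` is graded
    (hgraded : D = ⨆ γ : Γ, D ⊓ 𝒞 γ)
    -- `D` is a subcoalgebra: `Δ(D)` lies in the image of `D ⊗ D` in `C ⊗ C`
    (hsub : ∀ x ∈ D, Coalgebra.comul x ∈ Submodule.map₂ (TensorProduct.mk F C C) D D)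
    (hD0 : D ⊓ 𝒞 0 = ⊥) :
    D = ⊥ := by
  classical
  -- projections onto the graded pieces
  let e := LinearEquiv.ofBijective (DirectSum.coeLinearMap 𝒞) hinternal
  let π : Γ → (C →ₗ[F] C) := fun γ =>
    (𝒞 γ).subtype ∘ₗ (DirectSum.component F Γ (fun γ => (𝒞 γ : Type _)) γ) ∘ₗ e.symm.toLinearMap
  have h1 : ∀ γ (x : C), x ∈ 𝒞 γ → π γ x = x := by
    intro γ x hx
    simp only [π, LinearMap.comp_apply, LinearEquiv.coe_coe]
    rw [← DirectSum.apply_eq_component,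
      DirectSum.IsInternal.ofBijective_coeLinearMap_of_mem hinternal hx]
    rfl
  have h2 : ∀ γ β, β ≠ γ → ∀ x ∈ 𝒞 β, π γ x = 0 := by
    intro γ β hβγ x hx
    simp only [π, LinearMap.comp_apply, LinearEquiv.coe_coe]
    rw [← DirectSum.apply_eq_component,
      DirectSum.IsInternal.ofBijective_coeLinearMap_of_mem_ne hinternal hβγ hx]
    rfl
  -- π 0 kills D
  have hπ0D : ∀ x ∈ D, π 0 x = 0 := by
    have : D ≤ LinearMap.ker (π 0) := by
      rw [hgraded]
      apply iSup_le
      intro β x hx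
      rcases eq_or_ne β 0 with rfl | hβ
      · have hx0 : x = 0 := (Submodule.mem_bot F).mp (hD0 ▸ hx)
        simp [hx0]
      · exact LinearMap.mem_ker.mpr (h2 0 β hβ x hx.2)
    intro x hx
    exact LinearMap.mem_ker.mp (this hx)
  -- units lemma: α + γ = γ, γ ≠ 0 implies α = 0
  have hunit : ∀ γ : Γ, γ ≠ 0 → ∀ α : Γ, α + γ = γ → α = 0 := by
    intro γ hγ α hαγ
    by_contra hα
    obtain ⟨h, hh⟩ := hbdd γ hγ
    have hns : ∀ n : ℕ, n • α + γ = γ := by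
      intro n
      induction n with
      | zero => simp
      | succ n ih => rw [succ_nsmul, add_assoc, hαγ, ih]
    have hsum : ∀ n : ℕ, (List.replicate n α ++ [γ]).sum = γ := by
      intro n
      simp [List.sum_replicate, hns n]
    have := hh (List.replicate (h + 1) α ++ [γ])
      (by
        intro x hx
        rcases List.mem_append.mp hx with hx | hx
        · rw [List.eq_of_mem_replicate hx]; exact hα
        · rw [List.mem_singleton.mp hx]; exact hγ)
      (hsum (h + 1))
    simp at this
  -- main step: every graded piece of D vanishes
  suffices hkey : ∀ γ : Γ, D ⊓ 𝒞 γ = ⊥ by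
    rw [hgraded]
    simp [hkey]
  intro γ
  rcases eq_or_ne γ 0 with rfl | hγ
  · exact hD0
  rw [eq_bot_iff]
  rintro x ⟨hxD, hxγ⟩
  -- two maps C ⊗ C → C
  set f : C ⊗[F] C →ₗ[F] C :=
    (π γ) ∘ₗ (TensorProduct.lid F C).toLinearMap ∘ₗ
      (LinearMap.rTensor C (Coalgebra.counit (R := F))) with hf
  set T : C ⊗[F] C →ₗ[F] C :=
    (π γ) ∘ₗ (TensorProduct.lid F C).toLinearMap ∘ₗ
      (LinearMap.rTensor C ((Coalgebra.counit (R := F)) ∘ₗ π 0)) with hT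
  have hfapp : ∀ a b : C, f (a ⊗ₜ[F] b) = (Coalgebra.counit (R := F) a : F) • π γ b := by
    intro a b
    simp [hf, LinearMap.rTensor_tmul, TensorProduct.lid_tmul, map_smul]
  have hTapp : ∀ a b : C, T (a ⊗ₜ[F] b) = (Coalgebra.counit (R := F) (π 0 a) : F) • π γ b := by
    intro a b
    simp [hT, LinearMap.rTensor_tmul, TensorProduct.lid_tmul, map_smul]
  -- f(Δx) = x
  have hfx : f (Coalgebra.comul x) = x := by
    rw [hf]
    simp only [LinearMap.comp_apply, LinearEquiv.coe_coe]
    rw [Coalgebra.rTensor_counit_comul]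
    simp only [TensorProduct.lid_tmul, one_smul]
    exact h1 γ x hxγ
  -- f(Δx) = T(Δx)
  have hfT : f (Coalgebra.comul x) = T (Coalgebra.comul x) := by
    have hmem := hΔ γ x hxγ
    have hle : (⨆ p : {p : Γ × Γ // p.1 + p.2 = γ},
        Submodule.map₂ (TensorProduct.mk F C C) (𝒞 (p : Γ × Γ).1) (𝒞 (p : Γ × Γ).2)) ≤
        LinearMap.ker (f - T) := by
      apply iSup_le
      rintro ⟨⟨α, β⟩, hp⟩
      rw [Submodule.map₂_le]
      intro a ha b hb
      simp only [LinearMap.mem_ker, LinearMap.sub_apply, TensorProduct.mk_apply, hfapp, hTapp]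
      rcases eq_or_ne β γ with rfl | hβγ
      · have hα : α = 0 := hunit β hγ α hp
        have ha' : a ∈ 𝒞 (0 : Γ) := by rw [← hα]; exact ha
        rw [h1 0 a ha', sub_self]
      · rw [h2 γ β hβγ b hb]
        simp
    have := hle hmem
    rw [LinearMap.mem_ker, LinearMap.sub_apply, sub_eq_zero] at this
    exact this
  -- T(Δx) = 0
  have hT0 : T (Coalgebra.comul x) = 0 := by
    have hle : Submodule.map₂ (TensorProduct.mk F C C) D D ≤ LinearMap.ker T := by
      rw [Submodule.map₂_le]
      intro a ha b hb
      simp only [LinearMap.mem_ker, TensorProduct.mk_apply, hTapp, hπ0D a ha]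
      simp
    exact LinearMap.mem_ker.mp (hle (hsub x hxD))
  rw [Submodule.mem_bot, ← hfx, hfT, hT0]
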